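/- Let m, n be positive integers, let A, B ∈ M_m(GF(2)) and C, D ∈ M_n(GF(2)), where GF(2) = ℤ/2ℤ is the field with two elements. Then det_1((A⊗C)(B⊗D)) = det_1(A⊗C)·det_1(B⊗D). -/

import Mathlib

open Matrix Kronecker

/-- The partial determinant `det₁`: for `A ∈ M_{mn}(F) = M_m(F) ⊗ M_n(F)`,
`det1 A` is the `n × n` matrix whose `(i,j)` entry is the determinant of the
block `A_{ij} ∈ M_m(F)` given by `(A_{ij})_{kl} = A (k,i) (l,j)`. -/
def det1 {F : Type*} [Field F] {m n : ℕ}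
    (A : Matrix (Fin m × Fin n) (Fin m × Fin n) F) : Matrix (Fin n) (Fin n) F :=
  Matrix.of fun i j => Matrix.det (Matrix.of fun k l : Fin m => A (k, i) (l, j))

/-- The `m`-th Hadamard (entrywise) power of a matrix. -/
def hpow {F : Type*} [Monoid F] {n : ℕ} (B : Matrix (Fin n) (Fin n) F) (m : ℕ) :
    Matrix (Fin n) (Fin n) F :=
  Matrix.of fun i j => (B i j) ^ m

lemma zmod2_pow {m : ℕ} (hm : 0 < m) (x : ZMod 2) : x ^ m = x := by
  fin_cases x
  · show (0 : ZMod 2) ^ m = 0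
    exact zero_pow hm.ne'
  · show (1 : ZMod 2) ^ m = 1
    exact one_pow m

lemma det1_kronecker {m n : ℕ} (hm : 0 < m)
    (X : Matrix (Fin m) (Fin m) (ZMod 2)) (Y : Matrix (Fin n) (Fin n) (ZMod 2))
    (i j : Fin n) : det1 (X ⊗ₖ Y) i j = X.det * Y i j := by
  have h : (Matrix.of fun k l : Fin m => (X ⊗ₖ Y) (k, i) (l, j)) = (Y i j) • X := by
    ext k l
    simp [Matrix.kroneckerMap_apply, mul_comm]
  simp only [det1, Matrix.of_apply, h, Matrix.det_smul, Fintype.card_fin, zmod2_pow hm, mul_comm]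

/-- Over `GF(2)`, the partial determinant is always multiplicative on
Kronecker products. -/
theorem det1_mul_kronecker_gf2 {m n : ℕ} (hm : 0 < m) (hn : 0 < n)
    (A B : Matrix (Fin m) (Fin m) (ZMod 2)) (C D : Matrix (Fin n) (Fin n) (ZMod 2)) :
    det1 ((A ⊗ₖ C) * (B ⊗ₖ D)) = det1 (A ⊗ₖ C) * det1 (B ⊗ₖ D) := by
  ext i j
  rw [← Matrix.mul_kronecker_mul, Matrix.mul_apply]
  simp only [det1_kronecker hm, Matrix.det_mul, Matrix.mul_apply, Finset.mul_sum]
  congr 1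
  ext k
  ring
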